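/- Assume Z = D − C·A^d·B = 0, A^π·B = 0, and B·C·A^π = 0. Let W = A·A^d + A^d·B·C·A^d. Then the Drazin inverse of M is M^d = [I; C·A^d]·((A·W)^d)^2·A·[I, A^d·B] (the product of the (m+n)×m block column [I; C·A^d], the m×m matrix ((A·W)^d)^2·A, and the m×(m+n) block row [I, A^d·B]). -/

import Mathlib

open Matrix Finset

/-- `X` is the Drazin inverse of `A`: `A X = X A`, `X A X = X`, and
`A^(k+1) X = A^k` for some (hence all sufficiently large) `k`. -/
def IsDrazinInverse {ι : Type*} [Fintype ι] [DecidableEq ι]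
    (A X : Matrix ι ι ℂ) : Prop :=
  A * X = X * A ∧ X * A * X = X ∧ ∃ k : ℕ, A ^ (k + 1) * X = A ^ k

private lemma dpow {M : Type*} [Monoid M] (F E : M) (k : ℕ)
    (h : F ^ (k + 1) * E = F ^ k) : ∀ j, k ≤ j → F ^ (j + 1) * E = F ^ j := by
  intro j hj
  induction j, hj using Nat.le_induction with
  | base => exact h
  | succ n hn ih =>
    have h2 : F ^ (n + 1 + 1) = F * F ^ (n + 1) := by rw [← pow_succ']
    rw [h2, mul_assoc, ih, ← pow_succ']

private lemma pow_factor {ι κ : Type*} [Fintype ι] [DecidableEq ι] [Fintype κ] [DecidableEq κ]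
    (U : Matrix ι κ ℂ) (V : Matrix κ ι ℂ) :
    ∀ j : ℕ, (U * V) ^ (j + 1) = U * (V * U) ^ j * V := by
  intro j
  induction j with
  | zero => simp
  | succ j ih => rw [pow_succ, ih, pow_succ]; simp only [Matrix.mul_assoc]

private lemma cline {ι κ : Type*} [Fintype ι] [DecidableEq ι] [Fintype κ] [DecidableEq κ]
    (U : Matrix ι κ ℂ) (V : Matrix κ ι ℂ) (Y : Matrix κ κ ℂ)
    (hY : IsDrazinInverse (V * U) Y) :
    IsDrazinInverse (U * V) (U * Y ^ 2 * V) := by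
  obtain ⟨h1, h2, k, h3⟩ := hY
  have hc2 : (V * U) * Y ^ 2 = Y ^ 2 * (V * U) := by
    calc (V * U) * Y ^ 2 = ((V * U) * Y) * Y := by simp only [pow_two, Matrix.mul_assoc]
      _ = (Y * (V * U)) * Y := by rw [h1]
      _ = Y * ((V * U) * Y) := by rw [Matrix.mul_assoc]
      _ = Y * (Y * (V * U)) := by rw [h1]
      _ = Y ^ 2 * (V * U) := by simp only [pow_two, Matrix.mul_assoc]
  refine ⟨?_, ?_, k + 1, ?_⟩
  · have t : V * (U * (Y ^ 2 * V)) = Y ^ 2 * (V * (U * V)) := by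
      calc V * (U * (Y ^ 2 * V)) = ((V * U) * Y ^ 2) * V := by simp only [Matrix.mul_assoc]
        _ = (Y ^ 2 * (V * U)) * V := by rw [hc2]
        _ = Y ^ 2 * (V * (U * V)) := by simp only [Matrix.mul_assoc]
    simp only [Matrix.mul_assoc]
    rw [t]
  · have swap : (V * U) * (Y * (Y * V)) = Y * ((V * U) * (Y * V)) := by
      calc (V * U) * (Y * (Y * V)) = ((V * U) * Y) * (Y * V) := by simp only [Matrix.mul_assoc]
        _ = (Y * (V * U)) * (Y * V) := by rw [h1]
        _ = Y * ((V * U) * (Y * V)) := by rw [Matrix.mul_assoc]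
    have c2V : Y * ((V * U) * (Y * V)) = Y * V := by
      calc Y * ((V * U) * (Y * V)) = (Y * (V * U) * Y) * V := by simp only [Matrix.mul_assoc]
        _ = Y * V := by rw [h2]
    have sand : Y ^ 2 * (V * (U * (V * (U * (Y ^ 2 * V))))) = Y ^ 2 * V := by
      calc Y ^ 2 * (V * (U * (V * (U * (Y ^ 2 * V)))))
          = Y * (Y * ((V * U) * ((V * U) * (Y * (Y * V))))) := by
            simp only [pow_two, Matrix.mul_assoc]
        _ = Y * (Y * ((V * U) * (Y * ((V * U) * (Y * V))))) := by rw [swap]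
        _ = Y * (Y * V) := by rw [c2V, c2V]
        _ = Y ^ 2 * V := by simp only [pow_two, Matrix.mul_assoc]
    simp only [Matrix.mul_assoc]
    rw [sand]
  · rw [pow_factor U V (k + 1), pow_factor U V k]
    have key : (V * U) ^ (k + 1) * ((V * U) * (Y ^ 2 * V)) = (V * U) ^ k * V := by
      calc (V * U) ^ (k + 1) * ((V * U) * (Y ^ 2 * V))
          = ((V * U) ^ (k + 1) * (V * U)) * (Y ^ 2 * V) := by rw [← Matrix.mul_assoc]
        _ = (V * U) ^ (k + 1 + 1) * (Y ^ 2 * V) := by rw [← pow_succ]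
        _ = ((V * U) ^ (k + 1 + 1) * Y ^ 2) * V := by rw [← Matrix.mul_assoc]
        _ = (((V * U) ^ (k + 1 + 1) * Y) * Y) * V := by rw [pow_two, ← Matrix.mul_assoc]
        _ = ((V * U) ^ (k + 1) * Y) * V := by
            rw [dpow (V * U) Y k h3 (k + 1) (Nat.le_succ k)]
        _ = (V * U) ^ k * V := by rw [h3]
    calc (U * (V * U) ^ (k + 1) * V) * (U * Y ^ 2 * V)
        = U * ((V * U) ^ (k + 1) * ((V * U) * (Y ^ 2 * V))) := by simp only [Matrix.mul_assoc]
      _ = U * ((V * U) ^ k * V) := by rw [key]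
      _ = U * (V * U) ^ k * V := by rw [← Matrix.mul_assoc]

set_option maxHeartbeats 2000000 in
theorem stmt_15 {m n : ℕ}
    (A Ad : Matrix (Fin m) (Fin m) ℂ) (B : Matrix (Fin m) (Fin n) ℂ)
    (C : Matrix (Fin n) (Fin m) ℂ) (D : Matrix (Fin n) (Fin n) ℂ)
    (hAd : IsDrazinInverse A Ad)
    (hZ : D - C * Ad * B = 0) (hAB : (1 - A * Ad) * B = 0)
    (hBCA : B * C * (1 - A * Ad) = 0)
    (AWd : Matrix (Fin m) (Fin m) ℂ)
    (hAWd : IsDrazinInverse (A * (A * Ad + Ad * B * C * Ad)) AWd) :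
    IsDrazinInverse (Matrix.fromBlocks A B C D)
      (Matrix.fromRows (1 : Matrix (Fin m) (Fin m) ℂ) (C * Ad) *
        (AWd ^ 2 * A) *
        Matrix.fromCols (1 : Matrix (Fin m) (Fin m) ℂ) (Ad * B)) := by
  obtain ⟨a1, a2, kA, a3⟩ := hAd
  set F := A * (A * Ad + Ad * B * C * Ad) with hF
  obtain ⟨e1, e2, kF, e3⟩ := hAWd
  set G : Matrix (Fin m) (Fin m) ℂ := 1 + Ad * B * C * Ad with hG
  set Qn := A - A * A * Ad with hQ
  rw [sub_eq_zero] at hZ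
  rw [Matrix.sub_mul, Matrix.one_mul, sub_eq_zero] at hAB
  rw [mul_sub, mul_one, sub_eq_zero] at hBCA
  have fB : A * Ad * B = B := hAB.symm
  have fBC : B * C * (A * Ad) = B * C := hBCA.symm
  have fBC' : B * (C * (A * Ad)) = B * C := by simpa only [Matrix.mul_assoc] using fBC
  -- parametric helpers
  have pfB : ∀ {p : Type} (X : Matrix (Fin n) p ℂ), A * (Ad * (B * X)) = B * X := by
    intro p X
    calc A * (Ad * (B * X)) = (A * Ad * B) * X := by simp only [Matrix.mul_assoc]
      _ = B * X := by rw [fB]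
  have pa2 : ∀ {p : Type} (X : Matrix (Fin m) p ℂ), Ad * (A * (Ad * X)) = Ad * X := by
    intro p X
    calc Ad * (A * (Ad * X)) = (Ad * A * Ad) * X := by simp only [Matrix.mul_assoc]
      _ = Ad * X := by rw [a2]
  have a2'' : Ad * (A * Ad) = Ad := by rw [← Matrix.mul_assoc]; exact a2
  have idem : A * Ad * (A * Ad) = A * Ad := by
    calc A * Ad * (A * Ad) = A * (Ad * A * Ad) := by simp only [Matrix.mul_assoc]
      _ = A * Ad := by rw [a2]
  have sAG : A * G = A + B * C * Ad := by
    rw [hG, mul_add, mul_one]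
    congr 1
    calc A * (Ad * B * C * Ad) = A * (Ad * (B * (C * Ad))) := by simp only [Matrix.mul_assoc]
      _ = B * (C * Ad) := pfB (C * Ad)
      _ = B * C * Ad := by rw [← Matrix.mul_assoc]
  have sF : F = A * A * Ad + B * C * Ad := by
    rw [hF, mul_add]
    congr 1
    · rw [← Matrix.mul_assoc]
    · calc A * (Ad * B * C * Ad) = A * (Ad * (B * (C * Ad))) := by simp only [Matrix.mul_assoc]
        _ = B * (C * Ad) := pfB (C * Ad)
        _ = B * C * Ad := by rw [← Matrix.mul_assoc]
  have i2 : A * Ad * F = F := by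
    rw [sF, mul_add]
    congr 1
    · calc A * Ad * (A * A * Ad) = A * (Ad * (A * (A * Ad))) := by simp only [Matrix.mul_assoc]
        _ = A * (Ad * (A * (Ad * A))) := by rw [a1]
        _ = A * (Ad * A) := by rw [pa2 A]
        _ = A * (A * Ad) := by rw [← a1]
        _ = A * A * Ad := by rw [← Matrix.mul_assoc]
    · calc A * Ad * (B * C * Ad) = A * (Ad * (B * (C * Ad))) := by simp only [Matrix.mul_assoc]
        _ = B * (C * Ad) := pfB (C * Ad)
        _ = B * C * Ad := by rw [← Matrix.mul_assoc]
  have i3 : F * (A * Ad) = F := by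
    rw [sF, add_mul]
    congr 1
    · calc A * A * Ad * (A * Ad) = A * (A * (Ad * (A * Ad))) := by simp only [Matrix.mul_assoc]
        _ = A * (A * Ad) := by rw [a2'']
        _ = A * A * Ad := by rw [← Matrix.mul_assoc]
    · calc B * C * Ad * (A * Ad) = B * (C * (Ad * (A * Ad))) := by simp only [Matrix.mul_assoc]
        _ = B * (C * Ad) := by rw [a2'']
        _ = B * C * Ad := by rw [← Matrix.mul_assoc]
  have i4 : F * AWd ^ 2 = AWd := by
    rw [pow_two, ← Matrix.mul_assoc, e1]; exact e2
  have i5 : AWd ^ 2 * F = AWd := by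
    rw [pow_two, Matrix.mul_assoc, ← e1, ← Matrix.mul_assoc]; exact e2
  have i6 : A * Ad * AWd = AWd := by
    calc A * Ad * AWd = A * Ad * (F * AWd ^ 2) := by rw [i4]
      _ = A * Ad * F * AWd ^ 2 := by rw [← Matrix.mul_assoc]
      _ = F * AWd ^ 2 := by rw [i2]
      _ = AWd := i4
  have i7 : AWd * (A * Ad) = AWd := by
    calc AWd * (A * Ad) = AWd ^ 2 * F * (A * Ad) := by rw [i5]
      _ = AWd ^ 2 * (F * (A * Ad)) := by rw [Matrix.mul_assoc]
      _ = AWd ^ 2 * F := by rw [i3]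
      _ = AWd := i5
  have swapA : A * A * Ad = A * Ad * A := by
    calc A * A * Ad = A * (A * Ad) := by rw [Matrix.mul_assoc]
      _ = A * (Ad * A) := by rw [a1]
      _ = A * Ad * A := by rw [← Matrix.mul_assoc]
  have i8 : F * Qn = 0 := by
    rw [hQ, mul_sub, swapA, ← Matrix.mul_assoc, i3, sub_self]
  have i9 : Qn * F = 0 := by
    rw [hQ, sub_mul, Matrix.mul_assoc A A Ad, Matrix.mul_assoc A (A * Ad) F, i2, sub_self]
  have i10 : AWd * Qn = 0 := by
    calc AWd * Qn = AWd ^ 2 * F * Qn := by rw [i5]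
      _ = AWd ^ 2 * (F * Qn) := by rw [Matrix.mul_assoc]
      _ = 0 := by rw [i8, mul_zero]
  have i11 : Qn * AWd = 0 := by
    calc Qn * AWd = Qn * (F * AWd ^ 2) := by rw [i4]
      _ = Qn * F * AWd ^ 2 := by rw [← Matrix.mul_assoc]
      _ = 0 := by rw [i9, zero_mul]
  have i12 : A * G = F + Qn := by
    rw [sAG, sF, hQ]; abel
  have i13 : (A * G) * AWd = F * AWd := by rw [i12, add_mul, i11, add_zero]
  have i13' : AWd * (A * G) = AWd * F := by rw [i12, mul_add, i10, add_zero]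
  have i14 : (A * G) * AWd ^ 2 = AWd := by
    rw [pow_two, ← Matrix.mul_assoc, i13, Matrix.mul_assoc, ← pow_two, i4]
  have i15 : AWd ^ 2 * (A * G) = AWd := by
    rw [pow_two, Matrix.mul_assoc, i13', ← Matrix.mul_assoc, ← pow_two, i5]
  have h3p : AWd ^ 3 = AWd ^ 2 * AWd := pow_succ AWd 2
  have h3p' : AWd ^ 3 = AWd * AWd ^ 2 := pow_succ' AWd 2
  have i18 : (A * G) * AWd ^ 3 = AWd ^ 2 := by
    rw [h3p, ← Matrix.mul_assoc, i14, ← pow_two]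
  have i16 : G = Ad * (A * G) + (1 - A * Ad) := by
    rw [hG, sAG, mul_add, ← a1]
    simp only [Matrix.mul_assoc]
    abel
  have t2 : A * Ad * AWd ^ 3 = AWd ^ 3 := by
    calc A * Ad * AWd ^ 3 = A * Ad * (AWd * AWd ^ 2) := by rw [h3p']
      _ = (A * Ad * AWd) * AWd ^ 2 := by rw [← Matrix.mul_assoc]
      _ = AWd * AWd ^ 2 := by rw [i6]
      _ = AWd ^ 3 := h3p'.symm
  have i17 : G * AWd ^ 3 = Ad * AWd ^ 2 := by
    rw [i16, add_mul, sub_mul, one_mul, t2, sub_self, add_zero, Matrix.mul_assoc, i18]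
  -- E is a Drazin inverse of A*G
  have hπA : (1 - A * Ad) * A = A * (1 - A * Ad) := by
    rw [sub_mul, one_mul, mul_sub, mul_one, Matrix.mul_assoc, ← a1]
  have hππ : (1 - A * Ad) * (1 - A * Ad) = 1 - A * Ad := by
    rw [sub_mul, one_mul, mul_sub, mul_one, idem]
    abel
  have hQ1 : Qn = A * (1 - A * Ad) := by
    rw [hQ, mul_sub, mul_one, ← Matrix.mul_assoc]
  have hApow : ∀ j, kA ≤ j → A ^ j * (1 - A * Ad) = 0 := by
    intro j hj
    rw [mul_sub, mul_one, ← Matrix.mul_assoc, ← pow_succ, dpow A Ad kA a3 j hj, sub_self]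
  have hQpow : ∀ j : ℕ, Qn ^ (j + 1) = A ^ (j + 1) * (1 - A * Ad) := by
    intro j
    induction j with
    | zero => simpa using hQ1
    | succ j ih =>
      rw [pow_succ, ih, hQ1]
      calc A ^ (j + 1) * (1 - A * Ad) * (A * (1 - A * Ad))
          = A ^ (j + 1) * (((1 - A * Ad) * A) * (1 - A * Ad)) := by simp only [Matrix.mul_assoc]
        _ = A ^ (j + 1) * ((A * (1 - A * Ad)) * (1 - A * Ad)) := by rw [hπA]
        _ = A ^ (j + 1) * (A * ((1 - A * Ad) * (1 - A * Ad))) := by simp only [Matrix.mul_assoc]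
        _ = A ^ (j + 1) * (A * (1 - A * Ad)) := by rw [hππ]
        _ = A ^ (j + 1 + 1) * (1 - A * Ad) := by rw [pow_succ A (j + 1), Matrix.mul_assoc]
  have zq : ∀ j, kA ≤ j → Qn ^ (j + 1) = 0 := by
    intro j hj
    rw [hQpow j]
    exact hApow (j + 1) (by omega)
  have hAGpow : ∀ j : ℕ, (A * G) ^ (j + 1) = F ^ (j + 1) + Qn ^ (j + 1) := by
    intro j
    induction j with
    | zero => simpa using i12
    | succ j ih =>
      rw [pow_succ, ih, i12, add_mul, mul_add, mul_add]
      have z1 : F ^ (j + 1) * Qn = 0 := by rw [pow_succ, Matrix.mul_assoc, i8, mul_zero]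
      have z2 : Qn ^ (j + 1) * F = 0 := by rw [pow_succ, Matrix.mul_assoc, i9, mul_zero]
      rw [z1, z2, add_zero, zero_add, ← pow_succ, ← pow_succ]
  have hDrzAG : IsDrazinInverse (A * G) AWd := by
    refine ⟨?_, ?_, kA + kF + 1, ?_⟩
    · rw [i13, i13']; exact e1
    · rw [i13']; exact e2
    · rw [hAGpow (kA + kF + 1), hAGpow (kA + kF),
        zq (kA + kF + 1) (by omega), zq (kA + kF) (by omega), add_zero, add_zero]
      exact dpow F AWd kF e3 (kA + kF + 1) (by omega)
  have hDrzGA : IsDrazinInverse (G * A) (G * AWd ^ 2 * A) := cline G A AWd hDrzAG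
  -- the factorization of M
  have sQP : fromCols (1 : Matrix (Fin m) (Fin m) ℂ) (Ad * B) * fromRows A C = G * A := by
    rw [fromCols_mul_fromRows, Matrix.one_mul, hG, add_mul, one_mul]
    congr 1
    have sAdBCAdA : Ad * B * C * Ad * A = Ad * (B * C) := by
      calc Ad * B * C * Ad * A = Ad * (B * (C * (Ad * A))) := by simp only [Matrix.mul_assoc]
        _ = Ad * (B * (C * (A * Ad))) := by rw [← a1]
        _ = Ad * (B * C) := by rw [fBC']
    rw [sAdBCAdA, ← Matrix.mul_assoc]
  have sPQ : fromRows A C * fromCols (1 : Matrix (Fin m) (Fin m) ℂ) (Ad * B) =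
      fromBlocks A B C D := by
    rw [fromRows_mul_fromCols, Matrix.mul_one, Matrix.mul_one, hZ, ← Matrix.mul_assoc, ← Matrix.mul_assoc, fB]
  have i15x : ∀ (X : Matrix (Fin m) (Fin m) ℂ), AWd ^ 2 * ((A * G) * X) = AWd * X := by
    intro X
    calc AWd ^ 2 * ((A * G) * X) = (AWd ^ 2 * (A * G)) * X := by rw [← Matrix.mul_assoc]
      _ = AWd * X := by rw [i15]
  have hY2 : (G * AWd ^ 2 * A) ^ 2 = G * (AWd ^ 3 * A) := by
    calc (G * AWd ^ 2 * A) ^ 2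
        = G * (AWd ^ 2 * ((A * G) * (AWd ^ 2 * A))) := by simp only [pow_two, Matrix.mul_assoc]
      _ = G * (AWd * (AWd ^ 2 * A)) := by rw [i15x (AWd ^ 2 * A)]
      _ = G * (AWd ^ 3 * A) := by
          rw [show AWd * (AWd ^ 2 * A) = AWd ^ 3 * A from by rw [← Matrix.mul_assoc, ← h3p']]
  have c1 : A * (G * (AWd ^ 3 * A)) = AWd ^ 2 * A := by
    calc A * (G * (AWd ^ 3 * A)) = ((A * G) * AWd ^ 3) * A := by simp only [Matrix.mul_assoc]
      _ = AWd ^ 2 * A := by rw [i18]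
  have c2 : C * (G * (AWd ^ 3 * A)) = (C * Ad) * (AWd ^ 2 * A) := by
    calc C * (G * (AWd ^ 3 * A)) = C * ((G * AWd ^ 3) * A) := by simp only [Matrix.mul_assoc]
      _ = C * ((Ad * AWd ^ 2) * A) := by rw [i17]
      _ = (C * Ad) * (AWd ^ 2 * A) := by simp only [Matrix.mul_assoc]
  have sX : fromRows A C * (G * AWd ^ 2 * A) ^ 2 *
      fromCols (1 : Matrix (Fin m) (Fin m) ℂ) (Ad * B) =
      fromRows (1 : Matrix (Fin m) (Fin m) ℂ) (C * Ad) * (AWd ^ 2 * A) *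
      fromCols (1 : Matrix (Fin m) (Fin m) ℂ) (Ad * B) := by
    rw [hY2, fromRows_mul A C (G * (AWd ^ 3 * A)),
      fromRows_mul (1 : Matrix (Fin m) (Fin m) ℂ) (C * Ad) (AWd ^ 2 * A),
      Matrix.one_mul, c1, c2]
  have final := cline (fromRows A C) (fromCols (1 : Matrix (Fin m) (Fin m) ℂ) (Ad * B))
    (G * AWd ^ 2 * A) (by rw [sQP]; exact hDrzGA)
  rw [sPQ, sX] at final
  exact final
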